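/- Let K be a natural number, f : ℝ → ℝ a C^(K+1) function, C > 0 and λ ≥ 1 real. Define g(x) := √( C² + ∑_{N=0}^{K} λ^(−2N) · (f^(N)(x))² ), where f^(N) denotes the N-th derivative. Then g is differentiable and for every x, |g'(x)| ≤ λ · g(x) + λ^(−K) · |f^(K+1)(x)|. -/

import Mathlib

lemma aux_sum15 (K : ℕ) (b : ℕ → ℝ) :
    ∑ N ∈ Finset.range K, b N * b (N + 1) ≤ ∑ N ∈ Finset.range (K + 1), (b N) ^ 2 := by
  have h1 : ∑ N ∈ Finset.range K, b N * b (N + 1)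
      ≤ ∑ N ∈ Finset.range K, ((b N) ^ 2 + (b (N + 1)) ^ 2) / 2 :=
    Finset.sum_le_sum fun i _ => by nlinarith [sq_nonneg (b i - b (i + 1))]
  have h2 : ∑ N ∈ Finset.range K, ((b N) ^ 2 + (b (N + 1)) ^ 2) / 2
      = (∑ N ∈ Finset.range K, (b N) ^ 2 + ∑ N ∈ Finset.range K, (b (N + 1)) ^ 2) / 2 := by
    rw [← Finset.sum_add_distrib, Finset.sum_div]
  have h3 : ∑ N ∈ Finset.range K, (b N) ^ 2 ≤ ∑ N ∈ Finset.range (K + 1), (b N) ^ 2 :=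
    Finset.sum_le_sum_of_subset_of_nonneg (Finset.range_subset_range.mpr (Nat.le_succ K))
      (fun i _ _ => sq_nonneg _)
  have h4 : ∑ N ∈ Finset.range K, (b (N + 1)) ^ 2 ≤ ∑ N ∈ Finset.range (K + 1), (b N) ^ 2 := by
    rw [Finset.sum_range_succ' (fun N => (b N) ^ 2)]
    nlinarith [sq_nonneg (b 0)]
  linarith

theorem stmt_15 (K : ℕ) (f : ℝ → ℝ) (hf : ContDiff ℝ (K + 1) f)
    (C l : ℝ) (hC : 0 < C) (hl : 1 ≤ l)
    (g : ℝ → ℝ)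
    (hg : ∀ x, g x = Real.sqrt (C ^ 2 +
      ∑ N ∈ Finset.range (K + 1), l ^ (-(2 * (N : ℤ))) * (iteratedDeriv N f x) ^ 2)) :
    Differentiable ℝ g ∧
      ∀ x, |deriv g x| ≤ l * g x + l ^ (-(K : ℤ)) * |iteratedDeriv (K + 1) f x| := by
  have hl0 : (0 : ℝ) < l := lt_of_lt_of_le one_pos hl
  set F : ℝ → ℝ := fun x => C ^ 2 +
      ∑ N ∈ Finset.range (K + 1), l ^ (-(2 * (N : ℤ))) * (iteratedDeriv N f x) ^ 2 with hFdef
  have hgF : g = fun x => Real.sqrt (F x) := funext hg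
  subst hgF
  have hFpos : ∀ x, 0 < F x := by
    intro x
    have h0 : 0 ≤ ∑ N ∈ Finset.range (K + 1), l ^ (-(2 * (N : ℤ))) * (iteratedDeriv N f x) ^ 2 :=
      Finset.sum_nonneg fun i _ => mul_nonneg (zpow_nonneg hl0.le _) (sq_nonneg _)
    have : (0:ℝ) < C ^ 2 := by positivity
    simp only [hFdef]
    linarith
  -- derivative of F
  have hdF : ∀ x, HasDerivAt F
      (∑ N ∈ Finset.range (K + 1),
        l ^ (-(2 * (N : ℤ))) * (2 * (iteratedDeriv N f x * iteratedDeriv (N + 1) f x))) x := by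
    intro x
    have hsum : HasDerivAt (fun x => ∑ N ∈ Finset.range (K + 1),
        l ^ (-(2 * (N : ℤ))) * (iteratedDeriv N f x) ^ 2)
        (∑ N ∈ Finset.range (K + 1),
          l ^ (-(2 * (N : ℤ))) * (2 * (iteratedDeriv N f x * iteratedDeriv (N + 1) f x))) x := by
      apply HasDerivAt.fun_sum
      intro N hN
      have hNK : N ≤ K := Nat.lt_succ_iff.mp (Finset.mem_range.mp hN)
      have hdiff : Differentiable ℝ (iteratedDeriv N f) :=
        hf.differentiable_iteratedDeriv N (by exact_mod_cast Nat.lt_succ_of_le hNK)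
      have h1 : HasDerivAt (iteratedDeriv N f) (iteratedDeriv (N + 1) f x) x := by
        rw [iteratedDeriv_succ]
        exact (hdiff x).hasDerivAt
      have h2 := (h1.mul h1).const_mul (l ^ (-(2 * (N : ℤ))))
      convert h2 using 1
      · ext y; ring
      · ext y; simp only [Pi.mul_apply]; ring
      · ring
    have := hsum.const_add (C ^ 2)
    exact this
  have hdg : ∀ x, HasDerivAt (fun x => Real.sqrt (F x))
      ((∑ N ∈ Finset.range (K + 1),
        l ^ (-(2 * (N : ℤ))) * (iteratedDeriv N f x * iteratedDeriv (N + 1) f x)) / Real.sqrt (F x)) x := by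
    intro x
    have h := (Real.hasDerivAt_sqrt (hFpos x).ne').comp x (hdF x)
    refine h.congr_deriv ?_
    have hs : Real.sqrt (F x) ≠ 0 := (Real.sqrt_pos.mpr (hFpos x)).ne'
    have h2 : ∑ N ∈ Finset.range (K + 1),
        l ^ (-(2 * (N : ℤ))) * (2 * (iteratedDeriv N f x * iteratedDeriv (N + 1) f x))
        = 2 * ∑ N ∈ Finset.range (K + 1),
          l ^ (-(2 * (N : ℤ))) * (iteratedDeriv N f x * iteratedDeriv (N + 1) f x) := by
      rw [Finset.mul_sum]
      exact Finset.sum_congr rfl fun N _ => by ring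
    rw [h2]
    field_simp
  constructor
  · exact fun x => (hdg x).differentiableAt
  intro x
  rw [(hdg x).deriv]
  set u : ℕ → ℝ := fun N => iteratedDeriv N f x with hu
  set b : ℕ → ℝ := fun N => l ^ (-(N : ℤ)) * |u N| with hb
  have hbnn : ∀ N, 0 ≤ b N := fun N => mul_nonneg (zpow_nonneg hl0.le _) (abs_nonneg _)
  have hgx : 0 < Real.sqrt (F x) := Real.sqrt_pos.mpr (hFpos x)
  have hgsq : Real.sqrt (F x) ^ 2 = F x := Real.sq_sqrt (hFpos x).le
  -- b N ^ 2 equals the summand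
  have hbsq : ∀ N, (b N) ^ 2 = l ^ (-(2 * (N : ℤ))) * (u N) ^ 2 := by
    intro N
    simp only [hb]
    rw [mul_pow, ← zpow_natCast (l ^ (-(N:ℤ))) 2]  -- (l^a)^2 = l^(a*2)
    rw [← zpow_mul, sq_abs]
    ring_nf
  -- per-term abs bound
  have hterm : ∀ N : ℕ, |l ^ (-(2 * (N : ℤ))) * (u N * u (N + 1))| = l * (b N * b (N + 1)) := by
    intro N
    have hz : l ^ (-(2 * (N : ℤ))) = l * (l ^ (-(N : ℤ)) * l ^ (-((N : ℤ) + 1))) := by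
      rw [show -(2 * (N : ℤ)) = 1 + (-(N : ℤ) + -((N : ℤ) + 1)) by ring,
        zpow_add₀ hl0.ne', zpow_add₀ hl0.ne', zpow_one]
    rw [abs_mul, abs_mul, abs_of_pos (zpow_pos hl0 _), hz]
    simp only [hb]
    push_cast
    ring
  -- bound on the sum
  have hS : |∑ N ∈ Finset.range (K + 1), l ^ (-(2 * (N : ℤ))) * (u N * u (N + 1))|
      ≤ l * F x + Real.sqrt (F x) * (l ^ (-(K : ℤ)) * |u (K + 1)|) := by
    calc |∑ N ∈ Finset.range (K + 1), l ^ (-(2 * (N : ℤ))) * (u N * u (N + 1))|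
        ≤ ∑ N ∈ Finset.range (K + 1), |l ^ (-(2 * (N : ℤ))) * (u N * u (N + 1))| :=
          Finset.abs_sum_le_sum_abs _ _
      _ = ∑ N ∈ Finset.range (K + 1), l * (b N * b (N + 1)) := by
          exact Finset.sum_congr rfl fun N _ => hterm N
      _ = l * (∑ N ∈ Finset.range K, b N * b (N + 1)) + l * (b K * b (K + 1)) := by
          rw [Finset.sum_range_succ, Finset.mul_sum]
      _ ≤ l * F x + Real.sqrt (F x) * (l ^ (-(K : ℤ)) * |u (K + 1)|) := by
          have h1 : ∑ N ∈ Finset.range K, b N * b (N + 1) ≤ F x := by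
            have := aux_sum15 K b
            have heq : ∑ N ∈ Finset.range (K + 1), (b N) ^ 2
                = ∑ N ∈ Finset.range (K + 1), l ^ (-(2 * (N : ℤ))) * (u N) ^ 2 :=
              Finset.sum_congr rfl fun N _ => hbsq N
            have hC2 : (0:ℝ) ≤ C ^ 2 := sq_nonneg C
            simp only [hFdef]
            simp only [hu] at heq ⊢
            linarith [this.trans_eq heq]
          have h2 : b K ≤ Real.sqrt (F x) := by
            have hbK2 : (b K) ^ 2 ≤ F x := by
              have heq := hbsq K
              have hmem : K ∈ Finset.range (K + 1) := Finset.self_mem_range_succ K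
              have hle : l ^ (-(2 * (K : ℤ))) * (u K) ^ 2
                  ≤ ∑ N ∈ Finset.range (K + 1), l ^ (-(2 * (N : ℤ))) * (u N) ^ 2 :=
                Finset.single_le_sum (f := fun N : ℕ => l ^ (-(2 * (N : ℤ))) * (u N) ^ 2)
                  (fun i _ => mul_nonneg (zpow_nonneg hl0.le _) (sq_nonneg _)) hmem
              have hC2 : (0:ℝ) ≤ C ^ 2 := sq_nonneg C
              simp only [hFdef]
              simp only [hu] at hle ⊢
              linarith [heq.trans_le hle]
            nlinarith [hbnn K, hgx, hgsq]
          have h3 : l * b (K + 1) = l ^ (-(K : ℤ)) * |u (K + 1)| := by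
            have hz1 : l ^ (-(K : ℤ)) = l * l ^ (-((K : ℤ) + 1)) := by
              rw [show -(K : ℤ) = 1 + -((K : ℤ) + 1) by ring, zpow_add₀ hl0.ne', zpow_one]
            simp only [hb]
            push_cast
            rw [hz1]
            ring
          have h4 : l * (b K * b (K + 1)) ≤ Real.sqrt (F x) * (l ^ (-(K : ℤ)) * |u (K + 1)|) := by
            rw [show l * (b K * b (K + 1)) = b K * (l * b (K + 1)) by ring, h3]
            exact mul_le_mul_of_nonneg_right h2
              (h3 ▸ mul_nonneg hl0.le (hbnn (K + 1)))
          have := mul_le_mul_of_nonneg_left h1 hl0.le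
          linarith
  -- finish
  rw [abs_div, abs_of_pos hgx, div_le_iff₀ hgx]
  calc |∑ N ∈ Finset.range (K + 1), l ^ (-(2 * (N : ℤ))) * (iteratedDeriv N f x * iteratedDeriv (N + 1) f x)|
      ≤ l * F x + Real.sqrt (F x) * (l ^ (-(K : ℤ)) * |u (K + 1)|) := hS
    _ = (l * Real.sqrt (F x) + l ^ (-(K : ℤ)) * |iteratedDeriv (K + 1) f x|) * Real.sqrt (F x) := by
        simp only [hu]
        nlinarith [hgsq]
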